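/- Let M and N be positive integers with M < N, and let a_1, …, a_N ∈ ℂ^M be nonzero vectors. If the rank-one matrices a_1a_1ᴴ, …, a_Na_Nᴴ are jointly diagonalizable, then there exist distinct indices n and n′ and a nonzero scalar c ∈ ℂ such that a_n = c · a_{n′}. -/

import Mathlib

open Matrix

lemma conj_vecMulVec {M : ℕ} (W : Matrix (Fin M) (Fin M) ℂ) (u : Fin M → ℂ) :
    Wᴴ * Matrix.vecMulVec u (star u) * W
      = Matrix.vecMulVec (Wᴴ *ᵥ u) (star (Wᴴ *ᵥ u)) := by
  rw [vecMulVec_eq Unit, vecMulVec_eq Unit, star_mulVec, conjTranspose_conjTranspose,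
    replicateCol_mulVec, replicateRow_vecMul, Matrix.mul_assoc, Matrix.mul_assoc, Matrix.mul_assoc]

theorem stmt_0 (M N : ℕ) (hM : 0 < M) (hMN : M < N)
    (a : Fin N → (Fin M → ℂ)) (ha : ∀ n, a n ≠ 0)
    (hJD : ∃ W : Matrix (Fin M) (Fin M) ℂ, IsUnit W ∧
      ∀ n, (Wᴴ * Matrix.vecMulVec (a n) (star (a n)) * W).IsDiag) :
    ∃ n n' : Fin N, n ≠ n' ∧ ∃ c : ℂ, c ≠ 0 ∧ a n = c • a n' := by
  obtain ⟨W, hW, hdiag⟩ := hJD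
  have hWH : IsUnit Wᴴ := (Matrix.isUnit_conjTranspose W).2 hW
  have hinj : Function.Injective (Wᴴ).mulVec := mulVec_injective_iff_isUnit.2 hWH
  set b : Fin N → Fin M → ℂ := fun n => Wᴴ *ᵥ a n with hb
  have hbne : ∀ n, b n ≠ 0 := by
    intro n h
    apply ha n
    apply hinj
    simpa [Matrix.mulVec_zero] using h
  have hd : ∀ n, ∀ i j, i ≠ j → b n i * star (b n j) = 0 := by
    intro n i j hij
    have := hdiag n
    rw [conj_vecMulVec] at this
    simpa [vecMulVec_apply] using this hij
  -- each b n has a nonzero coordinate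
  have hex : ∀ n, ∃ i, b n i ≠ 0 := by
    intro n
    by_contra h
    push_neg at h
    exact hbne n (funext fun i => h i)
  choose f hf using hex
  obtain ⟨n, n', hnn, hfeq⟩ := Fintype.exists_ne_map_eq_of_card_lt f (by simpa using hMN)
  refine ⟨n, n', hnn, b n (f n) / b n' (f n'), div_ne_zero (hf n) (hf n'), ?_⟩
  -- b n is supported at f n only
  have hsupp : ∀ m i, i ≠ f m → b m i = 0 := by
    intro m i hi
    have := hd m i (f m) hi
    rcases mul_eq_zero.1 this with h | h
    · exact h
    · exact absurd (star_eq_zero.1 h) (hf m)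
  have hbeq : b n = (b n (f n) / b n' (f n')) • b n' := by
    funext i
    by_cases hi : i = f n
    · subst hi
      rw [Pi.smul_apply, smul_eq_mul, ← hfeq,
        div_mul_cancel₀ _ (hfeq ▸ hf n')]
    · rw [hsupp n i hi, Pi.smul_apply, hsupp n' i (hfeq ▸ hi), smul_zero]
  apply hinj
  show Wᴴ *ᵥ a n = Wᴴ *ᵥ _
  rw [Matrix.mulVec_smul]
  exact hbeq
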